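/- Let 0<x<1 be real and r∈ℂ with Re(r)>0, and assume [1]_r ≠ 0. The function u ↦ 1/([u]_r·[−u−1]_r) + 1/([−u]_r·[u−1]_r), whose two summands each have a simple pole at u=0, has a removable singularity at u=0, i.e. it extends to a holomorphic function on a neighbourhood of 0. -/

import Mathlib

set_option maxHeartbeats 1000000


open Complex

/-- `x^w := exp(w · log x)` for real `x` and complex `w`. -/
noncomputable def xpow (x : ℝ) (w : ℂ) : ℂ := Complex.exp (w * (Real.log x : ℂ))

/-- The infinite `q`-Pochhammer product `(z;q)_∞ = ∏_{j=0}^∞ (1 − q^j z)`. -/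
noncomputable def qPoch (z q : ℂ) : ℂ := ∏' j : ℕ, (1 - q ^ j * z)

/-- `Θ_q(z) = (z;q)_∞ (q z⁻¹;q)_∞ (q;q)_∞`. -/
noncomputable def jacTheta0 (q z : ℂ) : ℂ := qPoch z q * qPoch (q * z⁻¹) q * qPoch q q

/-- The Jacobi theta function `[u]_r = x^{u²/r − u} Θ_{x^{2r}}(x^{2u}) / ((x^{2r};x^{2r})_∞)³`. -/
noncomputable def jTheta (x : ℝ) (r u : ℂ) : ℂ :=
  xpow x (u ^ 2 / r - u) * jacTheta0 (xpow x (2 * r)) (xpow x (2 * u)) /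
    (qPoch (xpow x (2 * r)) (xpow x (2 * r))) ^ 3

section qp

variable {q : ℂ}

lemma exists_pow_half (hq : ‖q‖ < 1) (R : ℝ) : ∃ N : ℕ, ‖q‖ ^ N * R ≤ 1 / 2 := by
  rcases le_or_gt R 0 with hR | hR
  · exact ⟨0, by nlinarith⟩
  · have h := tendsto_pow_atTop_nhds_zero_of_lt_one (norm_nonneg q) hq
    have hε : (0:ℝ) < (1/2) / R := by positivity
    obtain ⟨N, hN⟩ := (Metric.tendsto_atTop.mp h ((1/2)/R) hε) |>.imp (fun N h => h N le_rfl)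
    refine ⟨N, ?_⟩
    rw [Real.dist_eq, sub_zero, _root_.abs_of_nonneg (by positivity)] at hN
    calc ‖q‖ ^ N * R ≤ (1/2)/R * R := by nlinarith
    _ = 1/2 := by field_simp

lemma qfac_norm_le (hq : ‖q‖ < 1) {w : ℂ} {N : ℕ} (hN : ‖q‖ ^ N * ‖w‖ ≤ 1 / 2) (j : ℕ) :
    ‖q ^ (j + N) * w‖ ≤ (1 / 2) * ‖q‖ ^ j := by
  have h0 : (0:ℝ) ≤ ‖q‖ := norm_nonneg q
  have : ‖q ^ (j + N) * w‖ = ‖q‖ ^ j * (‖q‖ ^ N * ‖w‖) := by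
    rw [norm_mul, norm_pow, pow_add]; ring
  rw [this]
  have hp : ‖q‖ ^ j ≤ 1 := pow_le_one₀ h0 hq.le
  nlinarith [pow_nonneg h0 j, norm_nonneg w]

lemma qfac_ne_zero (hq : ‖q‖ < 1) {w : ℂ} {N : ℕ} (hN : ‖q‖ ^ N * ‖w‖ ≤ 1 / 2) (j : ℕ) :
    1 - q ^ (j + N) * w ≠ 0 := by
  have h := qfac_norm_le hq hN j
  have hlt : ‖q ^ (j + N) * w‖ < 1 := by
    have : ‖q‖ ^ j ≤ 1 := pow_le_one₀ (norm_nonneg q) hq.le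
    nlinarith
  intro hc
  have : (1:ℂ) = q ^ (j + N) * w := by linear_combination hc
  rw [← this] at hlt; simp at hlt

lemma summable_qlog (hq : ‖q‖ < 1) {w : ℂ} {N : ℕ} (hN : ‖q‖ ^ N * ‖w‖ ≤ 1 / 2) :
    Summable fun j : ℕ => Complex.log (1 - q ^ (j + N) * w) := by
  refine Summable.of_norm_bounded (g := fun j => (3/2) * ((1/2) * ‖q‖ ^ j)) ?_ ?_
  · exact ((summable_geometric_of_lt_one (norm_nonneg q) hq).mul_left _).mul_left _
  · intro j
    have h1 : ‖-(q ^ (j + N) * w)‖ ≤ 1/2 := by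
      rw [norm_neg]
      exact (qfac_norm_le hq hN j).trans (by nlinarith [pow_le_one₀ (norm_nonneg q) hq.le (n := j)])
    have := Complex.norm_log_one_add_half_le_self h1
    rw [show (1 : ℂ) + -(q ^ (j + N) * w) = 1 - q ^ (j + N) * w by ring] at this
    refine this.trans ?_
    rw [norm_neg]
    nlinarith [qfac_norm_le hq hN j]

lemma hasProd_qPoch (hq : ‖q‖ < 1) {w : ℂ} {N : ℕ} (hN : ‖q‖ ^ N * ‖w‖ ≤ 1 / 2) :
    HasProd (fun j : ℕ => 1 - q ^ j * w)
      ((∏ j ∈ Finset.range N, (1 - q ^ j * w)) *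
        Complex.exp (∑' j : ℕ, Complex.log (1 - q ^ (j + N) * w))) := by
  have hs := (summable_qlog hq hN).hasSum
  have hp := hs.cexp
  have heq : (cexp ∘ fun j : ℕ => Complex.log (1 - q ^ (j + N) * w)) =
      fun j : ℕ => 1 - q ^ (j + N) * w := by
    funext j; exact Complex.exp_log (qfac_ne_zero hq hN j)
  rw [heq] at hp
  exact hp.prod_range_mul

lemma multipliable_qPoch (hq : ‖q‖ < 1) (w : ℂ) :
    Multipliable fun j : ℕ => 1 - q ^ j * w := by
  obtain ⟨N, hN⟩ := exists_pow_half hq ‖w‖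
  exact (hasProd_qPoch hq hN).multipliable

lemma qPoch_eq (hq : ‖q‖ < 1) {w : ℂ} {N : ℕ} (hN : ‖q‖ ^ N * ‖w‖ ≤ 1 / 2) :
    qPoch w q = (∏ j ∈ Finset.range N, (1 - q ^ j * w)) *
      Complex.exp (∑' j : ℕ, Complex.log (1 - q ^ (j + N) * w)) :=
  (hasProd_qPoch hq hN).tprod_eq

lemma qPoch_ne_zero (hq : ‖q‖ < 1) {w : ℂ} (hw : ∀ j : ℕ, 1 - q ^ j * w ≠ 0) :
    qPoch w q ≠ 0 := by
  obtain ⟨N, hN⟩ := exists_pow_half hq ‖w‖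
  rw [qPoch_eq hq hN]
  exact mul_ne_zero (Finset.prod_ne_zero_iff.mpr fun j _ => hw j) (Complex.exp_ne_zero _)

lemma qPoch_split (hq : ‖q‖ < 1) (w : ℂ) :
    qPoch w q = (1 - w) * qPoch (q * w) q := by
  have hm : Multipliable fun j : ℕ => 1 - q ^ (j + 1) * w := by
    have := multipliable_qPoch hq (q * w)
    refine this.congr fun j => ?_
    rw [pow_succ]; ring
  have h := tprod_eq_zero_mul' (M := ℂ) (f := fun j : ℕ => 1 - q ^ j * w) hm
  rw [qPoch, h]
  simp only [pow_zero, one_mul]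
  congr 1
  rw [qPoch]
  exact (tprod_congr fun j => by rw [pow_succ]; ring).symm

end qp
section qp2

open Complex Metric

variable {q : ℂ}

lemma norm_qlog_le (hq : ‖q‖ < 1) {w : ℂ} {N : ℕ} (hN : ‖q‖ ^ N * ‖w‖ ≤ 1 / 2) (j : ℕ) :
    ‖Complex.log (1 - q ^ (j + N) * w)‖ ≤ (3/4) * ‖q‖ ^ j := by
  have h1 : ‖-(q ^ (j + N) * w)‖ ≤ 1/2 := by
    rw [norm_neg]
    exact (qfac_norm_le hq hN j).trans (by nlinarith [pow_le_one₀ (norm_nonneg q) hq.le (n := j)])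
  have := Complex.norm_log_one_add_half_le_self h1
  rw [show (1 : ℂ) + -(q ^ (j + N) * w) = 1 - q ^ (j + N) * w by ring] at this
  refine this.trans ?_
  rw [norm_neg]
  nlinarith [qfac_norm_le hq hN j]

lemma S_differentiableOn (hq : ‖q‖ < 1) {N : ℕ} {R : ℝ} (hN : ‖q‖ ^ N * R ≤ 1 / 2) :
    DifferentiableOn ℂ (fun w => ∑' j : ℕ, Complex.log (1 - q ^ (j + N) * w))
      (Metric.ball (0:ℂ) R) := by
  have hball : ∀ w : ℂ, w ∈ Metric.ball (0:ℂ) R → ‖q‖ ^ N * ‖w‖ ≤ 1/2 := by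
    intro w hw
    rw [mem_ball, dist_zero_right] at hw
    nlinarith [pow_nonneg (norm_nonneg q) N]
  refine differentiableOn_tsum_of_summable_norm
    (u := fun j => (3/4) * ‖q‖ ^ j)
    (((summable_geometric_of_lt_one (norm_nonneg q) hq)).mul_left _) ?_ Metric.isOpen_ball ?_
  · intro j
    refine DifferentiableOn.clog ?_ ?_
    · exact ((differentiable_const _).sub ((differentiable_const _).mul differentiable_id)).differentiableOn
    · intro w hw
      refine Complex.mem_slitPlane_iff.mpr (Or.inl ?_)
      have h1 : ‖q ^ (j + N) * w‖ ≤ (1/2) * ‖q‖ ^ j := qfac_norm_le hq (hball w hw) j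
      have h2 : (q ^ (j + N) * w).re ≤ ‖q ^ (j + N) * w‖ := Complex.re_le_norm _
      have h3 : ((1:ℂ) - q ^ (j + N) * w).re = 1 - (q ^ (j + N) * w).re := by simp
      rw [h3]
      nlinarith [pow_le_one₀ (norm_nonneg q) hq.le (n := j)]
  · intro j w hw
    exact norm_qlog_le hq (hball w hw) j

lemma qPoch_differentiableAt (hq : ‖q‖ < 1) (w₀ : ℂ) :
    DifferentiableAt ℂ (fun w => qPoch w q) w₀ := by
  obtain ⟨N, hN⟩ := exists_pow_half hq (‖w₀‖ + 1)
  have hball : ∀ w : ℂ, w ∈ Metric.ball (0:ℂ) (‖w₀‖ + 1) → ‖q‖ ^ N * ‖w‖ ≤ 1/2 := by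
    intro w hw
    rw [mem_ball, dist_zero_right] at hw
    nlinarith [pow_nonneg (norm_nonneg q) N]
  have hdiff : DifferentiableOn ℂ
      (fun w => (∏ j ∈ Finset.range N, (1 - q ^ j * w)) *
        Complex.exp (∑' j : ℕ, Complex.log (1 - q ^ (j + N) * w)))
      (Metric.ball (0:ℂ) (‖w₀‖ + 1)) := by
    refine DifferentiableOn.mul ?_ ((S_differentiableOn hq hN).cexp)
    exact (Differentiable.fun_finsetProd (u := Finset.range N)
      (fun j _ => (differentiable_const _).sub ((differentiable_const _).mul differentiable_id))).differentiableOn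
  have hcongr : DifferentiableOn ℂ (fun w => qPoch w q) (Metric.ball (0:ℂ) (‖w₀‖ + 1)) := by
    refine hdiff.congr fun w hw => ?_
    exact qPoch_eq hq (hball w hw)
  exact hcongr.differentiableAt (Metric.isOpen_ball.mem_nhds (by rw [mem_ball, dist_zero_right]; linarith [norm_nonneg w₀]))

lemma qPoch_continuousAt (hq : ‖q‖ < 1) (w₀ : ℂ) :
    ContinuousAt (fun w => qPoch w q) w₀ :=
  (qPoch_differentiableAt hq w₀).continuousAt

end qp2
section theta

open Complex Metric

lemma xpow_ne_zero (x : ℝ) (w : ℂ) : xpow x w ≠ 0 := Complex.exp_ne_zero _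

lemma xpow_add (x : ℝ) (a b : ℂ) : xpow x (a + b) = xpow x a * xpow x b := by
  rw [xpow, xpow, xpow, add_mul, Complex.exp_add]

lemma xpow_neg (x : ℝ) (a : ℂ) : xpow x (-a) = (xpow x a)⁻¹ := by
  rw [xpow, xpow, neg_mul, Complex.exp_neg]

lemma norm_xpow (x : ℝ) (w : ℂ) : ‖xpow x w‖ = Real.exp (w.re * Real.log x) := by
  rw [xpow, Complex.norm_exp]
  congr 1
  simp [Complex.mul_re]

lemma hq_norm_lt {x : ℝ} (hx0 : 0 < x) (hx1 : x < 1) {r : ℂ} (hr : 0 < r.re) :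
    ‖xpow x (2 * r)‖ < 1 := by
  rw [norm_xpow, Real.exp_lt_one_iff, show ((2:ℂ) * r).re = 2 * r.re by simp]
  have hlog : Real.log x < 0 := Real.log_neg hx0 hx1
  nlinarith

lemma differentiable_xpow_comp {x : ℝ} {f : ℂ → ℂ} (hf : Differentiable ℂ f) :
    Differentiable ℂ (fun u => xpow x (f u)) := by
  simp only [xpow]
  exact (hf.mul_const _).cexp

lemma jTheta_odd {x : ℝ} (hx0 : 0 < x) (hx1 : x < 1) {r : ℂ} (hr : 0 < r.re) (u : ℂ) :
    jTheta x r (-u) = - jTheta x r u := by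
  have hq := hq_norm_lt hx0 hx1 hr
  set q := xpow x (2 * r) with hqdef
  set z := xpow x (2 * u) with hzdef
  have hz : z ≠ 0 := xpow_ne_zero _ _
  have e1 : xpow x (2 * (-u)) = z⁻¹ := by
    rw [show (2 : ℂ) * (-u) = -(2 * u) by ring, xpow_neg]
  have e2 : xpow x ((-u) ^ 2 / r - (-u)) = xpow x (u ^ 2 / r - u) * z := by
    rw [show (-u) ^ 2 / r - (-u) = (u ^ 2 / r - u) + 2 * u by ring, xpow_add]
  have e4 : z * (1 - z⁻¹) = -(1 - z) := by
    rw [mul_sub, mul_inv_cancel₀ hz]; ring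
  unfold jTheta jacTheta0
  rw [e1, e2, inv_inv, qPoch_split hq z⁻¹, qPoch_split hq z, ← hqdef, ← hzdef, ← neg_div]
  congr 1
  linear_combination (xpow x (u ^ 2 / r - u) * qPoch (q * z⁻¹) q * qPoch (q * z) q *
    qPoch q q) * e4

lemma differentiableAt_jTheta {x : ℝ} (hx0 : 0 < x) (hx1 : x < 1) {r : ℂ} (hr : 0 < r.re)
    (u₀ : ℂ) : DifferentiableAt ℂ (fun u => jTheta x r u) u₀ := by
  have hq := hq_norm_lt hx0 hx1 hr
  have hzdiff : Differentiable ℂ (fun u : ℂ => xpow x (2 * u)) :=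
    differentiable_xpow_comp ((differentiable_const _).mul differentiable_id)
  have h1 : DifferentiableAt ℂ (fun u : ℂ => xpow x (u ^ 2 / r - u)) u₀ :=
    (differentiable_xpow_comp (((differentiable_pow 2).div_const r).sub differentiable_id)) u₀
  have h2 : DifferentiableAt ℂ (fun u : ℂ => qPoch (xpow x (2 * u)) (xpow x (2 * r))) u₀ :=
    (qPoch_differentiableAt hq (xpow x (2 * u₀))).comp (f := fun u : ℂ => xpow x (2 * u)) u₀ (hzdiff u₀)
  have h3 : DifferentiableAt ℂ
      (fun u : ℂ => qPoch (xpow x (2 * r) * (xpow x (2 * u))⁻¹) (xpow x (2 * r))) u₀ := by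
    refine (qPoch_differentiableAt hq _).comp u₀ ?_
    exact (differentiableAt_const _).mul ((hzdiff u₀).inv (xpow_ne_zero _ _))
  unfold jTheta jacTheta0
  exact ((h1.mul ((h2.mul h3).mul (differentiableAt_const _)))).div_const _

end theta
section main

open Complex Metric Filter Topology

lemma tendsto_div_self_of_zero {F : ℂ → ℂ} (hF : DifferentiableAt ℂ F 0) (h0 : F 0 = 0) :
    Filter.Tendsto (fun u => F u / u) (nhdsWithin 0 {(0:ℂ)}ᶜ) (nhds (deriv F 0)) := by
  have h := hF.hasDerivAt
  rw [hasDerivAt_iff_tendsto_slope] at h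
  refine h.congr fun u => ?_
  simp [slope_def_field, h0]

lemma xpow_two_zero (x : ℝ) : xpow x (2 * 0) = 1 := by
  rw [mul_zero, xpow, zero_mul, Complex.exp_zero]

lemma hasDerivAt_z (x : ℝ) : HasDerivAt (fun u : ℂ => xpow x (2 * u))
    (2 * (Real.log x : ℂ)) 0 := by
  have h1 : HasDerivAt (fun u : ℂ => (2 * u) * (Real.log x : ℂ)) (2 * (Real.log x : ℂ)) 0 := by
    simpa using ((hasDerivAt_id (0:ℂ)).const_mul (2:ℂ)).mul_const ((Real.log x : ℂ))
  have h2 := h1.cexp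
  simpa [xpow] using h2

lemma tendsto_one_sub_z {x : ℝ} :
    Filter.Tendsto (fun u : ℂ => (1 - xpow x (2 * u)) / u) (nhdsWithin 0 {(0:ℂ)}ᶜ)
      (nhds (-(2 * (Real.log x : ℂ)))) := by
  have hW : DifferentiableAt ℂ (fun u : ℂ => 1 - xpow x (2 * u)) 0 :=
    ((hasDerivAt_z x).const_sub 1).differentiableAt
  have hderiv : deriv (fun u : ℂ => 1 - xpow x (2 * u)) 0 = -(2 * (Real.log x : ℂ)) :=
    ((hasDerivAt_z x).const_sub 1).deriv
  have h0 : (fun u : ℂ => 1 - xpow x (2 * u)) 0 = 0 := by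
    simp only
    rw [mul_zero, xpow, zero_mul, Complex.exp_zero, sub_self]
  simpa [hderiv] using tendsto_div_self_of_zero hW h0

lemma one_sub_z_ne {x : ℝ} (hx0 : 0 < x) (hx1 : x < 1) {u : ℂ}
    (hu : ‖u‖ * |Real.log x| < Real.pi) (hne : u ≠ 0) : 1 - xpow x (2 * u) ≠ 0 := by
  have hlog : Real.log x < 0 := Real.log_neg hx0 hx1
  have hlogne : Real.log x ≠ 0 := ne_of_lt hlog
  intro hcon
  have hz1 : Complex.exp (2 * u * (Real.log x : ℂ)) = 1 := by
    have : xpow x (2 * u) = 1 := by linear_combination -hcon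
    rwa [xpow] at this
  obtain ⟨n, hn⟩ := Complex.exp_eq_one_iff.mp hz1
  have hnorm := congrArg norm hn
  have hL : ‖2 * u * (Real.log x : ℂ)‖ = 2 * ‖u‖ * |Real.log x| := by
    simp [norm_mul, Complex.norm_real]
  have hR : ‖(n : ℂ) * (2 * Real.pi * Complex.I)‖ = |(n : ℝ)| * (2 * Real.pi) := by
    rw [norm_mul]
    congr 1
    · exact_mod_cast Complex.norm_intCast n
    · simp [norm_mul, Complex.norm_real, abs_of_pos Real.pi_pos]
  rw [hL, hR] at hnorm
  rcases eq_or_ne n 0 with h0 | h0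
  · rw [h0] at hn
    simp only [Int.cast_zero, zero_mul] at hn
    rcases mul_eq_zero.mp hn with h | h
    · rcases mul_eq_zero.mp h with h' | h'
      · norm_num at h'
      · exact hne h'
    · exact hlogne (by exact_mod_cast h)
  · have h1 : (1 : ℝ) ≤ |(n : ℝ)| := by
      have := Int.one_le_abs h0
      calc (1:ℝ) ≤ (|n| : ℤ) := by exact_mod_cast this
      _ = |(n : ℝ)| := by push_cast [Int.cast_abs]; ring
    nlinarith [Real.pi_pos, norm_nonneg u, abs_nonneg (Real.log x)]

theorem stmt16 (x : ℝ) (hx0 : 0 < x) (hx1 : x < 1) (r : ℂ) (hr : 0 < r.re)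
    (h1 : jTheta x r 1 ≠ 0) :
    ∃ (g : ℂ → ℂ) (U : Set ℂ), IsOpen U ∧ (0 : ℂ) ∈ U ∧ DifferentiableOn ℂ g U ∧
      ∀ u ∈ U, u ≠ 0 →
        g u = 1 / (jTheta x r u * jTheta x r (-u - 1)) +
            1 / (jTheta x r (-u) * jTheta x r (u - 1)) := by
  have hq : ‖xpow x (2 * r)‖ < 1 := hq_norm_lt hx0 hx1 hr
  set q : ℂ := xpow x (2 * r) with hqdef
  set T : ℂ → ℂ := fun u => jTheta x r u with hTdef
  set f : ℂ → ℂ := fun u => 1 / (T u * T (-u - 1)) + 1 / (T (-u) * T (u - 1)) with hfdef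
  have hTdiff : ∀ u₀ : ℂ, DifferentiableAt ℂ T u₀ := differentiableAt_jTheta hx0 hx1 hr
  have hodd : ∀ u : ℂ, T (-u) = -T u := jTheta_odd hx0 hx1 hr
  have hTm1 : T (-1) ≠ 0 := by
    rw [hodd 1]; exact neg_ne_zero.mpr h1
  obtain ⟨M, hM⟩ := exists_pow_half hq 2
  have hqM1 : ∀ w : ℂ, ‖w‖ ≤ 2 → ‖q‖ ^ (M + 1) * ‖w‖ ≤ 1 / 2 := by
    intro w hw
    have h2 : ‖q‖ ^ (M + 1) ≤ ‖q‖ ^ M := pow_le_pow_of_le_one (norm_nonneg q) hq.le (by omega)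
    have h3 : (0:ℝ) ≤ ‖q‖ ^ (M+1) := pow_nonneg (norm_nonneg q) _
    nlinarith [pow_nonneg (norm_nonneg q) M, norm_nonneg w]
  set E : ℂ → ℂ := fun u =>
    xpow x (u ^ 2 / r - u) *
      ((∏ j ∈ Finset.range M, (1 - q ^ (j + 1) * xpow x (2 * u))) *
        Complex.exp (∑' j : ℕ, Complex.log (1 - q ^ (j + (M + 1)) * xpow x (2 * u)))) *
      (qPoch (q * (xpow x (2 * u))⁻¹) q * qPoch q q) / (qPoch q q) ^ 3 with hEdef
  have hfact : ∀ u : ℂ, ‖xpow x (2 * u)‖ ≤ 2 → T u = (1 - xpow x (2 * u)) * E u := by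
    intro u hu
    have hN' : ‖q‖ ^ (M + 1) * ‖xpow x (2 * u)‖ ≤ 1 / 2 := hqM1 _ hu
    show jTheta x r u = _
    unfold jTheta jacTheta0
    rw [← hqdef, qPoch_eq hq hN', Finset.prod_range_succ', hEdef]
    simp only [pow_zero, one_mul]
    ring
  have hz0 : xpow x (2 * (0:ℂ)) = 1 := xpow_two_zero x
  have hzcont : Continuous (fun u : ℂ => xpow x (2 * u)) :=
    (differentiable_xpow_comp ((differentiable_const _).mul differentiable_id)).continuous
  have hScont0 : ContinuousAt
      (fun w : ℂ => ∑' j : ℕ, Complex.log (1 - q ^ (j + (M + 1)) * w)) (xpow x (2 * (0:ℂ))) := by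
    rw [hz0]
    have hd := S_differentiableOn hq (N := M + 1) (R := 2) (by
      have := hqM1 (2 : ℂ) (by norm_num)
      simpa using this)
    exact ((hd.differentiableAt (Metric.isOpen_ball.mem_nhds (by
      norm_num [Metric.mem_ball, dist_eq_norm]))).continuousAt)
  have hEcont : ContinuousAt E 0 := by
    rw [hEdef]
    refine ContinuousAt.div_const ?_ _
    refine ContinuousAt.mul (ContinuousAt.mul ?_ (ContinuousAt.mul ?_ ?_)) ?_
    · exact ((differentiable_xpow_comp (((differentiable_pow 2).div_const r).sub
        differentiable_id)).continuous).continuousAt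
    · exact (continuous_finset_prod _ fun j _ =>
        (continuous_const.sub (continuous_const.mul hzcont))).continuousAt
    · have h1 : ContinuousAt ((fun w : ℂ => ∑' j : ℕ, Complex.log (1 - q ^ (j + (M + 1)) * w)) ∘
          (fun u : ℂ => xpow x (2 * u))) 0 := ContinuousAt.comp hScont0 hzcont.continuousAt
      exact Complex.continuous_exp.continuousAt.comp h1
    · refine ContinuousAt.mul ?_ continuousAt_const
      exact (qPoch_continuousAt hq _).comp
        (continuousAt_const.mul (hzcont.continuousAt.inv₀ (xpow_ne_zero _ _)))
  have hone_sub : ∀ j : ℕ, (1 : ℂ) - q ^ (j + 1) ≠ 0 := by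
    intro j hcon
    have hlt : ‖q ^ (j+1)‖ < 1 := by
      rw [norm_pow]; exact pow_lt_one₀ (norm_nonneg q) hq (by omega)
    have : q ^ (j+1) = 1 := by linear_combination -hcon
    rw [this] at hlt; simp at hlt
  have hqq : qPoch q q ≠ 0 := by
    refine qPoch_ne_zero hq fun j => ?_
    have := hone_sub j
    rwa [show q ^ (j+1) = q ^ j * q by rw [pow_succ]] at this
  have hE0 : E 0 ≠ 0 := by
    rw [hEdef]
    simp only
    refine div_ne_zero (mul_ne_zero (mul_ne_zero (xpow_ne_zero _ _) (mul_ne_zero ?_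
      (Complex.exp_ne_zero _))) (mul_ne_zero ?_ hqq)) (pow_ne_zero 3 hqq)
    · refine Finset.prod_ne_zero_iff.mpr fun j _ => ?_
      rw [hz0, mul_one]; exact hone_sub j
    · rw [hz0, inv_one, mul_one]; exact hqq
  -- eventual facts
  have hzle : ∀ᶠ u : ℂ in nhds 0, ‖xpow x (2 * u)‖ ≤ 2 := by
    have hc : ContinuousAt (fun u : ℂ => ‖xpow x (2 * u)‖) 0 := (hzcont.norm).continuousAt
    have h2 : ‖xpow x (2 * (0:ℂ))‖ < 2 := by rw [hz0]; norm_num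
    filter_upwards [hc.preimage_mem_nhds (Iio_mem_nhds h2)] with u hu
    exact le_of_lt hu
  have hfacte : ∀ᶠ u in nhds (0:ℂ), T u = (1 - xpow x (2 * u)) * E u :=
    hzle.mono fun u hu => hfact u hu
  have hEne : ∀ᶠ u in nhds (0:ℂ), E u ≠ 0 := hEcont.eventually_ne hE0
  have hdB1 : ∀ u₀ : ℂ, DifferentiableAt ℂ (fun u : ℂ => T (-u - 1)) u₀ := by
    intro u₀
    have h : DifferentiableAt ℂ (T ∘ fun u : ℂ => -u - 1) u₀ :=
      DifferentiableAt.comp u₀ (hTdiff _) ((differentiable_id.neg.sub_const 1) u₀)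
    exact h
  have hdB2 : ∀ u₀ : ℂ, DifferentiableAt ℂ (fun u : ℂ => T (u - 1)) u₀ := by
    intro u₀
    have h : DifferentiableAt ℂ (T ∘ fun u : ℂ => u - 1) u₀ :=
      DifferentiableAt.comp u₀ (hTdiff _) ((differentiable_id.sub_const 1) u₀)
    exact h
  have hdB3 : ∀ u₀ : ℂ, DifferentiableAt ℂ (fun u : ℂ => T (-u)) u₀ := by
    intro u₀
    have h : DifferentiableAt ℂ (T ∘ fun u : ℂ => -u) u₀ :=
      DifferentiableAt.comp u₀ (hTdiff _) (differentiable_id.neg u₀)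
    exact h
  have hcontB1 : ContinuousAt (fun u : ℂ => T (-u - 1)) 0 := (hdB1 0).continuousAt
  have hcontB2 : ContinuousAt (fun u : ℂ => T (u - 1)) 0 := (hdB2 0).continuousAt
  have hB1 : ∀ᶠ u in nhds (0:ℂ), T (-u - 1) ≠ 0 :=
    hcontB1.eventually_ne (by simpa using hTm1)
  have hB2 : ∀ᶠ u in nhds (0:ℂ), T (u - 1) ≠ 0 :=
    hcontB2.eventually_ne (by simpa using hTm1)
  have hzne : ∀ᶠ u in nhdsWithin (0:ℂ) {(0:ℂ)}ᶜ, 1 - xpow x (2 * u) ≠ 0 := by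
    rw [eventually_nhdsWithin_iff]
    have hδpos : (0:ℝ) < Real.pi / (|Real.log x| + 1) := by positivity
    filter_upwards [Metric.ball_mem_nhds (0:ℂ) hδpos] with u hu hne
    rw [mem_ball, dist_zero_right] at hu
    refine one_sub_z_ne hx0 hx1 ?_ (by simpa using hne)
    have habs : (0:ℝ) ≤ |Real.log x| := abs_nonneg _
    have hpi : (0:ℝ) < Real.pi := Real.pi_pos
    calc ‖u‖ * |Real.log x| ≤ ‖u‖ * (|Real.log x| + 1) := by nlinarith [norm_nonneg u]
    _ < Real.pi / (|Real.log x| + 1) * (|Real.log x| + 1) := by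
        apply mul_lt_mul_of_pos_right hu; linarith
    _ = Real.pi := by field_simp
  have hTne : ∀ᶠ u in nhdsWithin (0:ℂ) {(0:ℂ)}ᶜ, T u ≠ 0 := by
    filter_upwards [hzne, hfacte.filter_mono nhdsWithin_le_nhds,
      hEne.filter_mono nhdsWithin_le_nhds] with u h1 h2 h3
    rw [h2]; exact mul_ne_zero h1 h3
  -- limits
  set c : ℂ := (Real.log x : ℂ) with hcdef
  have hcC : -(2 * c) ≠ 0 := by
    refine neg_ne_zero.mpr (mul_ne_zero two_ne_zero ?_)
    rw [hcdef]
    exact Complex.ofReal_ne_zero.mpr (ne_of_lt (Real.log_neg hx0 hx1))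
  set Nf : ℂ → ℂ := fun u => T (u - 1) - T (-u - 1) with hNfdef
  have hNd : DifferentiableAt ℂ Nf 0 := (hdB2 0).sub (hdB1 0)
  have hN0 : Nf 0 = 0 := by
    show T (0 - 1) - T (-0 - 1) = 0
    norm_num
  have hlim1 : Tendsto (fun u => Nf u / u) (nhdsWithin (0:ℂ) {(0:ℂ)}ᶜ) (nhds (deriv Nf 0)) :=
    tendsto_div_self_of_zero hNd hN0
  have hlim2 : Tendsto (fun u : ℂ => u / (1 - xpow x (2 * u)))
      (nhdsWithin (0:ℂ) {(0:ℂ)}ᶜ) (nhds (-(2 * c))⁻¹) := by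
    have := (tendsto_one_sub_z (x := x)).inv₀ hcC
    refine this.congr fun u => ?_
    rw [inv_div]
  have hlim3 : Tendsto (fun u => (E u)⁻¹) (nhdsWithin (0:ℂ) {(0:ℂ)}ᶜ) (nhds (E 0)⁻¹) :=
    ((hEcont.tendsto).mono_left nhdsWithin_le_nhds).inv₀ hE0
  have hlim4 : Tendsto (fun u : ℂ => (T (-u - 1))⁻¹) (nhdsWithin (0:ℂ) {(0:ℂ)}ᶜ)
      (nhds (T (-1))⁻¹) := by
    have h := hcontB1.tendsto.mono_left (nhdsWithin_le_nhds (s := {(0:ℂ)}ᶜ))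
    simp only [neg_zero, zero_sub] at h
    exact h.inv₀ hTm1
  have hlim5 : Tendsto (fun u : ℂ => (T (u - 1))⁻¹) (nhdsWithin (0:ℂ) {(0:ℂ)}ᶜ)
      (nhds (T (-1))⁻¹) := by
    have h := hcontB2.tendsto.mono_left (nhdsWithin_le_nhds (s := {(0:ℂ)}ᶜ))
    simp only [zero_sub] at h
    exact h.inv₀ hTm1
  set L : ℂ := deriv Nf 0 * (-(2 * c))⁻¹ * (E 0)⁻¹ * (T (-1))⁻¹ * (T (-1))⁻¹ with hLdef
  have hflim : Tendsto f (nhdsWithin (0:ℂ) {(0:ℂ)}ᶜ) (nhds L) := by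
    have hprod := (((hlim1.mul hlim2).mul hlim3).mul hlim4).mul hlim5
    refine Tendsto.congr' ?_ hprod
    filter_upwards [hzne, hTne, hfacte.filter_mono nhdsWithin_le_nhds,
      hEne.filter_mono nhdsWithin_le_nhds, hB1.filter_mono nhdsWithin_le_nhds,
      hB2.filter_mono nhdsWithin_le_nhds, eventually_mem_nhdsWithin] with
      u hz hT hfe hE hb1 hb2 hmem
    have hu0 : u ≠ 0 := by simpa using hmem
    show Nf u / u * (u / (1 - xpow x (2 * u))) * (E u)⁻¹ * (T (-u - 1))⁻¹ * (T (u - 1))⁻¹ = f u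
    rw [hfdef]
    simp only
    rw [hodd u, hfe, hNfdef]
    simp only
    field_simp
    ring
  -- boundedness and conclusion
  have hbdd : ∀ᶠ u in nhdsWithin (0:ℂ) {(0:ℂ)}ᶜ, ‖f u‖ ≤ ‖L‖ + 1 := by
    have := hflim.norm.eventually_lt_const (lt_add_one ‖L‖)
    exact this.mono fun u hu => le_of_lt hu
  have hdiffAt : ∀ᶠ u in nhdsWithin (0:ℂ) {(0:ℂ)}ᶜ, DifferentiableAt ℂ f u := by
    filter_upwards [hTne, hB1.filter_mono nhdsWithin_le_nhds,
      hB2.filter_mono nhdsWithin_le_nhds] with u hT hb1 hb2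
    have hd1 := hdB1 u
    have hd2 := hdB2 u
    have hd3 := hdB3 u
    have hTn : T (-u) ≠ 0 := by rw [hodd u]; exact neg_ne_zero.mpr hT
    refine DifferentiableAt.add ?_ ?_
    · exact (differentiableAt_const 1).div ((hTdiff u).mul hd1) (mul_ne_zero hT hb1)
    · exact (differentiableAt_const 1).div (hd3.mul hd2) (mul_ne_zero hTn hb2)
  have hall : ∀ᶠ u in nhds (0:ℂ), u ≠ 0 → (DifferentiableAt ℂ f u ∧ ‖f u‖ ≤ ‖L‖ + 1) := by
    have h := (hdiffAt.and hbdd)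
    rw [eventually_nhdsWithin_iff] at h
    filter_upwards [h] with u hu hne
    exact hu (by simpa using hne)
  obtain ⟨ε, hε, hball⟩ := Metric.eventually_nhds_iff.mp hall
  have hUmem : Metric.ball (0:ℂ) ε ∈ nhds (0:ℂ) := Metric.ball_mem_nhds _ hε
  have hd : DifferentiableOn ℂ f (Metric.ball (0:ℂ) ε \ {0}) := by
    intro u hu
    have h1 : dist u 0 < ε := by simpa [Metric.mem_ball] using hu.1
    have h2 : u ≠ 0 := by simpa using hu.2
    exact ((hball h1 h2).1).differentiableWithinAt
  have hb : BddAbove (norm ∘ f '' (Metric.ball (0:ℂ) ε \ {0})) := by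
    refine ⟨‖L‖ + 1, ?_⟩
    rintro y ⟨u, hu, rfl⟩
    have h1 : dist u 0 < ε := by simpa [Metric.mem_ball] using hu.1
    have h2 : u ≠ 0 := by simpa using hu.2
    exact (hball h1 h2).2
  have hg := Complex.differentiableOn_update_limUnder_of_bddAbove hUmem hd hb
  refine ⟨_, Metric.ball (0:ℂ) ε, Metric.isOpen_ball, Metric.mem_ball_self hε, hg,
    fun u hu hne => ?_⟩
  rw [Function.update_of_ne hne]

end main
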